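/- Let n ≥ 1 be odd and let X, Y : S^n → ℝ^{n+1} be continuous maps such that for all p ∈ S^n: ⟨X(p), p⟩ = 0, ‖X(p)‖ = 1, X(−p) = −X(p), ⟨Y(p), p⟩ = 0, ‖Y(p)‖ = 1, and ⟨X(p), Y(p)⟩ = 0. For q ∈ S^n let η_q ∈ C([0,1], S^n) be η_q(t) = cos(πt) q + sin(πt) X(q), a path from q to −q. Define Φ, Φ' : P_a S^n → Λ S^n by Φ(σ) = concat(σ, η_{−σ(0)}) and Φ'(σ) = concat(reverse(η_{σ(0)}), σ), where reverse(α)(t) = α(1 − t). Then Φ and Φ' are well-defined continuous maps into the free loop space and Φ is homotopic to Φ'. -/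

import Mathlib

open unitInterval
open scoped RealInnerProductSpace ContinuousMap

namespace Stmt18

variable {n : ℕ}
abbrev E (n : ℕ) := EuclideanSpace ℝ (Fin (n + 1))
abbrev Sph (n : ℕ) := Metric.sphere (0 : E n) 1
abbrev Pa (n : ℕ) := {γ : C(I, Sph n) // γ 1 = -(γ 0)}

lemma norm_cs {q v : E n} (hq : ‖q‖ = 1) (hv : ‖v‖ = 1) (ho : ⟪v, q⟫ = 0) (θ : ℝ) :
    ‖Real.cos θ • q + Real.sin θ • v‖ = 1 := by
  have h := norm_add_sq_real (Real.cos θ • q) (Real.sin θ • v)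
  rw [real_inner_smul_left, real_inner_smul_right, real_inner_comm, ho] at h
  rw [norm_smul, norm_smul, hq, hv] at h
  have h2 : ‖Real.cos θ • q + Real.sin θ • v‖ ^ 2 = 1 := by
    rw [h]; simp only [Real.norm_eq_abs, sq_abs, mul_one, mul_zero, add_zero]
    nlinarith [Real.sin_sq_add_cos_sq θ]
  nlinarith [norm_nonneg (Real.cos θ • q + Real.sin θ • v)]

lemma mem_cs {q v : E n} (hq : ‖q‖ = 1) (hv : ‖v‖ = 1) (ho : ⟪v, q⟫ = 0) (θ : ℝ) :
    Real.cos θ • q + Real.sin θ • v ∈ Sph n := by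
  rw [mem_sphere_zero_iff_norm]; exact norm_cs hq hv ho θ

lemma sph_norm (q : Sph n) : ‖(q : E n)‖ = 1 := mem_sphere_zero_iff_norm.mp q.2

lemma cont_neg_sph : Continuous (fun q : Sph n => (-q : Sph n)) := by
  have : Continuous (fun q : Sph n => (-(q : E n))) := continuous_subtype_val.neg
  exact Continuous.subtype_mk this _

variable (X Y : C(Sph n, E n))
variable (hX1 : ∀ p, ⟪X p, (p : E n)⟫ = 0) (hX2 : ∀ p, ‖X p‖ = 1)

noncomputable def eta : C(Sph n × ℝ, Sph n) where
  toFun z := ⟨Real.cos (Real.pi * z.2) • (z.1 : E n) + Real.sin (Real.pi * z.2) • X z.1,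
    mem_cs (sph_norm z.1) (hX2 z.1) (hX1 z.1) _⟩
  continuous_toFun := by
    refine Continuous.subtype_mk ?_ _
    exact ((Real.continuous_cos.comp (continuous_const.mul continuous_snd)).smul
      (continuous_subtype_val.comp continuous_fst)).add
      ((Real.continuous_sin.comp (continuous_const.mul continuous_snd)).smul
      (X.continuous.comp continuous_fst))

lemma eta_coe (q : Sph n) (r : ℝ) :
    (eta X hX1 hX2 (q, r) : E n)
      = Real.cos (Real.pi * r) • (q : E n) + Real.sin (Real.pi * r) • X q := rfl

-- evaluation continuity helper
lemma cont_eval {β : Type*} [TopologicalSpace β] {p : β → C(I, Sph n)} {c : β → ℝ}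
    (hp : Continuous p) (hc : Continuous c) :
    Continuous fun b => p b (Set.projIcc (0:ℝ) 1 zero_le_one (c b)) := by
  have h1 : Continuous fun b => (p b, Set.projIcc (0:ℝ) 1 zero_le_one (c b)) :=
    hp.prodMk ((continuous_projIcc (h := zero_le_one)).comp hc)
  exact ContinuousEval.continuous_eval.comp h1

lemma proj_zero : Set.projIcc (0:ℝ) 1 zero_le_one 0 = (0 : I) := by
  rw [Set.projIcc_left]; rfl

lemma proj_one : Set.projIcc (0:ℝ) 1 zero_le_one 1 = (1 : I) := by
  rw [Set.projIcc_right]; rfl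


noncomputable def PhiMap : C(Pa n × I, Sph n) where
  toFun z :=
    if ((z.2 : ℝ)) ≤ 1/2
    then z.1.1 (Set.projIcc (0:ℝ) 1 zero_le_one (2 * (z.2:ℝ)))
    else eta X hX1 hX2 (-(z.1.1 0), 2 * (z.2:ℝ) - 1)
  continuous_toFun := by
    apply Continuous.if_le
    · exact cont_eval (continuous_subtype_val.comp continuous_fst)
        (continuous_const.mul (continuous_subtype_val.comp continuous_snd))
    · refine (eta X hX1 hX2).continuous.comp (Continuous.prodMk ?_ ?_)
      · exact cont_neg_sph.comp ((continuous_eval_const (0:I)).comp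
          (continuous_subtype_val.comp continuous_fst))
      · exact (continuous_const.mul (continuous_subtype_val.comp continuous_snd)).sub
          continuous_const
    · exact continuous_subtype_val.comp continuous_snd
    · exact continuous_const
    · intro z hz
      have h2 : 2 * ((z.2 : ℝ)) = 1 := by rw [hz]; norm_num
      have h0 : 2 * ((z.2 : ℝ)) - 1 = 0 := by rw [h2]; ring
      rw [h0, h2, proj_one, z.1.2]
      apply Subtype.ext
      rw [eta_coe]
      simp

lemma phi_loop (sg : Pa n) :
    (PhiMap X hX1 hX2).curry sg 0 = (PhiMap X hX1 hX2).curry sg 1 := by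
  simp only [ContinuousMap.curry_apply]
  show (PhiMap X hX1 hX2) (sg, 0) = (PhiMap X hX1 hX2) (sg, 1)
  simp only [PhiMap, ContinuousMap.coe_mk]
  norm_num [proj_zero]
  apply Subtype.ext
  rw [eta_coe]
  simp [coe_neg_sphere]

noncomputable def Phi : C(Pa n, {γ : C(I, Sph n) // γ 0 = γ 1}) where
  toFun sg := Subtype.mk ((PhiMap X hX1 hX2).curry sg) (phi_loop X hX1 hX2 sg)
  continuous_toFun := (PhiMap X hX1 hX2).curry.continuous.subtype_mk _


noncomputable def Phi'Map : C(Pa n × I, Sph n) where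
  toFun z :=
    if ((z.2 : ℝ)) ≤ 1/2
    then eta X hX1 hX2 (z.1.1 0, 1 - 2 * (z.2:ℝ))
    else z.1.1 (Set.projIcc (0:ℝ) 1 zero_le_one (2 * (z.2:ℝ) - 1))
  continuous_toFun := by
    apply Continuous.if_le
    · refine (eta X hX1 hX2).continuous.comp (Continuous.prodMk ?_ ?_)
      · exact (continuous_eval_const (0:I)).comp (continuous_subtype_val.comp continuous_fst)
      · exact continuous_const.sub
          (continuous_const.mul (continuous_subtype_val.comp continuous_snd))
    · exact cont_eval (continuous_subtype_val.comp continuous_fst)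
        ((continuous_const.mul (continuous_subtype_val.comp continuous_snd)).sub
          continuous_const)
    · exact continuous_subtype_val.comp continuous_snd
    · exact continuous_const
    · intro z hz
      have h2 : 2 * ((z.2 : ℝ)) - 1 = 0 := by rw [hz]; norm_num
      have h0 : 1 - 2 * ((z.2 : ℝ)) = 0 := by rw [hz]; ring
      rw [h0, h2, proj_zero]
      apply Subtype.ext
      rw [eta_coe]
      simp

lemma phi'_loop (sg : Pa n) :
    (Phi'Map X hX1 hX2).curry sg 0 = (Phi'Map X hX1 hX2).curry sg 1 := by
  simp only [ContinuousMap.curry_apply]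
  show (Phi'Map X hX1 hX2) (sg, 0) = (Phi'Map X hX1 hX2) (sg, 1)
  simp only [Phi'Map, ContinuousMap.coe_mk]
  norm_num
  rw [sg.2]
  apply Subtype.ext
  rw [eta_coe]
  simp [coe_neg_sphere]

noncomputable def Phi' : C(Pa n, {γ : C(I, Sph n) // γ 0 = γ 1}) where
  toFun sg := Subtype.mk ((Phi'Map X hX1 hX2).curry sg) (phi'_loop X hX1 hX2 sg)
  continuous_toFun := (Phi'Map X hX1 hX2).curry.continuous.subtype_mk _

noncomputable def Phi''Map : C(Pa n × I, Sph n) where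
  toFun z :=
    if ((z.2 : ℝ)) ≤ 1/2
    then z.1.1 (Set.projIcc (0:ℝ) 1 zero_le_one (2 * (z.2:ℝ)))
    else eta X hX1 hX2 (z.1.1 0, 2 - 2 * (z.2:ℝ))
  continuous_toFun := by
    apply Continuous.if_le
    · exact cont_eval (continuous_subtype_val.comp continuous_fst)
        (continuous_const.mul (continuous_subtype_val.comp continuous_snd))
    · refine (eta X hX1 hX2).continuous.comp (Continuous.prodMk ?_ ?_)
      · exact (continuous_eval_const (0:I)).comp (continuous_subtype_val.comp continuous_fst)
      · exact continuous_const.sub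
          (continuous_const.mul (continuous_subtype_val.comp continuous_snd))
    · exact continuous_subtype_val.comp continuous_snd
    · exact continuous_const
    · intro z hz
      have h2 : 2 * ((z.2 : ℝ)) = 1 := by rw [hz]; norm_num
      have h0 : 2 - 2 * ((z.2 : ℝ)) = 1 := by rw [h2]; ring
      rw [h0, h2, proj_one, z.1.2]
      apply Subtype.ext
      rw [eta_coe]
      simp [coe_neg_sphere]

lemma phi''_loop (sg : Pa n) :
    (Phi''Map X hX1 hX2).curry sg 0 = (Phi''Map X hX1 hX2).curry sg 1 := by
  simp only [ContinuousMap.curry_apply]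
  show (Phi''Map X hX1 hX2) (sg, 0) = (Phi''Map X hX1 hX2) (sg, 1)
  simp only [Phi''Map, ContinuousMap.coe_mk]
  norm_num [proj_zero]
  apply Subtype.ext
  rw [eta_coe]
  simp

noncomputable def Phi'' : C(Pa n, {γ : C(I, Sph n) // γ 0 = γ 1}) where
  toFun sg := Subtype.mk ((Phi''Map X hX1 hX2).curry sg) (phi''_loop X hX1 hX2 sg)
  continuous_toFun := (Phi''Map X hX1 hX2).curry.continuous.subtype_mk _


variable (hXodd : ∀ p : Sph n, X (-p) = -(X p))
variable (hY1 : ∀ p, ⟪Y p, (p : E n)⟫ = 0) (hY2 : ∀ p, ‖Y p‖ = 1)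
variable (hXY : ∀ p, ⟪X p, Y p⟫ = 0)

lemma zeta_mem (hX1' : ∀ p, ⟪X p, (p : E n)⟫ = 0) (hX2' : ∀ p, ‖X p‖ = 1)
    (hXodd' : ∀ p : Sph n, X (-p) = -(X p))
    (hY1' : ∀ p, ⟪Y p, (p : E n)⟫ = 0) (hY2' : ∀ p, ‖Y p‖ = 1)
    (hXY' : ∀ p, ⟪X p, Y p⟫ = 0) (p : Sph n) (s t : ℝ) :
    Real.cos (Real.pi * (2 * t - 1)) • ((-p : Sph n) : E n) +
      Real.sin (Real.pi * (2 * t - 1)) •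
        (Real.cos (Real.pi * s) • X (-p) + Real.sin (Real.pi * s) • Y p) ∈ Sph n := by
  have hw : ‖Real.cos (Real.pi * s) • X (-p) + Real.sin (Real.pi * s) • Y p‖ = 1 := by
    refine norm_cs (hX2' (-p)) (hY2' p) ?_ _
    rw [hXodd', inner_neg_right, real_inner_comm, hXY', neg_zero]
  have horth : ⟪Real.cos (Real.pi * s) • X (-p) + Real.sin (Real.pi * s) • Y p,
      ((-p : Sph n) : E n)⟫ = 0 := by
    rw [inner_add_left, real_inner_smul_left, real_inner_smul_left, hX1' (-p),
      coe_neg_sphere, inner_neg_right, hY1' p]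
    ring
  exact mem_cs (sph_norm (-p)) hw horth _

noncomputable def zeta : C((I × Pa n) × I, Sph n) where
  toFun z := ⟨Real.cos (Real.pi * (2 * (z.2:ℝ) - 1)) • ((-(z.1.2.1 0) : Sph n) : E n) +
      Real.sin (Real.pi * (2 * (z.2:ℝ) - 1)) •
        (Real.cos (Real.pi * (z.1.1:ℝ)) • X (-(z.1.2.1 0)) +
          Real.sin (Real.pi * (z.1.1:ℝ)) • Y (z.1.2.1 0)),
    zeta_mem X Y hX1 hX2 hXodd hY1 hY2 hXY _ _ _⟩
  continuous_toFun := by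
    refine Continuous.subtype_mk ?_ _
    have hs : Continuous (fun z : (I × Pa n) × I => ((z.1.1 : ℝ))) :=
      continuous_subtype_val.comp (continuous_fst.comp continuous_fst)
    have ht : Continuous (fun z : (I × Pa n) × I => ((z.2 : ℝ))) :=
      continuous_subtype_val.comp continuous_snd
    have hsg0 : Continuous (fun z : (I × Pa n) × I => z.1.2.1 0) :=
      (continuous_eval_const (0:I)).comp
        (continuous_subtype_val.comp (continuous_snd.comp continuous_fst))
    have ha : Continuous (fun z : (I × Pa n) × I => Real.pi * (2 * (z.2:ℝ) - 1)) :=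
      continuous_const.mul ((continuous_const.mul ht).sub continuous_const)
    exact ((Real.continuous_cos.comp ha).smul
        (continuous_subtype_val.comp (cont_neg_sph.comp hsg0))).add
      ((Real.continuous_sin.comp ha).smul
        (((Real.continuous_cos.comp (continuous_const.mul hs)).smul
          (X.continuous.comp (cont_neg_sph.comp hsg0))).add
        ((Real.continuous_sin.comp (continuous_const.mul hs)).smul
          (Y.continuous.comp hsg0))))

lemma zeta_coe (z : (I × Pa n) × I) :
    (zeta X Y hX1 hX2 hXodd hY1 hY2 hXY z : E n) =
      Real.cos (Real.pi * (2 * (z.2:ℝ) - 1)) • ((-(z.1.2.1 0) : Sph n) : E n) +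
      Real.sin (Real.pi * (2 * (z.2:ℝ) - 1)) •
        (Real.cos (Real.pi * (z.1.1:ℝ)) • X (-(z.1.2.1 0)) +
          Real.sin (Real.pi * (z.1.1:ℝ)) • Y (z.1.2.1 0)) := rfl

noncomputable def H1Map : C((I × Pa n) × I, Sph n) where
  toFun z :=
    if ((z.2 : ℝ)) ≤ 1/2
    then z.1.2.1 (Set.projIcc (0:ℝ) 1 zero_le_one (2 * (z.2:ℝ)))
    else zeta X Y hX1 hX2 hXodd hY1 hY2 hXY z
  continuous_toFun := by
    apply Continuous.if_le
    · exact cont_eval (continuous_subtype_val.comp (continuous_snd.comp continuous_fst))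
        (continuous_const.mul (continuous_subtype_val.comp continuous_snd))
    · exact (zeta X Y hX1 hX2 hXodd hY1 hY2 hXY).continuous
    · exact continuous_subtype_val.comp continuous_snd
    · exact continuous_const
    · intro z hz
      have h2 : 2 * ((z.2 : ℝ)) = 1 := by rw [hz]; norm_num
      have h0 : 2 * ((z.2 : ℝ)) - 1 = 0 := by rw [h2]; ring
      rw [h2, proj_one, z.1.2.2]
      apply Subtype.ext
      rw [zeta_coe, h0]
      simp

lemma h1_loop (p : I × Pa n) :
    (H1Map X Y hX1 hX2 hXodd hY1 hY2 hXY).curry p 0 =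
      (H1Map X Y hX1 hX2 hXodd hY1 hY2 hXY).curry p 1 := by
  simp only [ContinuousMap.curry_apply]
  show (H1Map X Y hX1 hX2 hXodd hY1 hY2 hXY) (p, 0) =
    (H1Map X Y hX1 hX2 hXodd hY1 hY2 hXY) (p, 1)
  simp only [H1Map, ContinuousMap.coe_mk]
  norm_num [proj_zero]
  apply Subtype.ext
  rw [zeta_coe]
  norm_num [coe_neg_sphere]


noncomputable def H1 : (Phi X hX1 hX2).Homotopy (Phi'' X hX1 hX2) where
  toFun p := Subtype.mk ((H1Map X Y hX1 hX2 hXodd hY1 hY2 hXY).curry p)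
    (h1_loop X Y hX1 hX2 hXodd hY1 hY2 hXY p)
  continuous_toFun :=
    (H1Map X Y hX1 hX2 hXodd hY1 hY2 hXY).curry.continuous.subtype_mk _
  map_zero_left sg := by
    apply Subtype.ext
    apply ContinuousMap.ext
    intro t
    show (H1Map X Y hX1 hX2 hXodd hY1 hY2 hXY) ((0, sg), t) = (PhiMap X hX1 hX2) (sg, t)
    simp only [H1Map, PhiMap, ContinuousMap.coe_mk]
    by_cases h : ((t : ℝ)) ≤ 1/2
    · rw [if_pos h, if_pos h]
    · rw [if_neg h, if_neg h]
      apply Subtype.ext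
      rw [zeta_coe, eta_coe]
      norm_num
  map_one_left sg := by
    apply Subtype.ext
    apply ContinuousMap.ext
    intro t
    show (H1Map X Y hX1 hX2 hXodd hY1 hY2 hXY) ((1, sg), t) = (Phi''Map X hX1 hX2) (sg, t)
    simp only [H1Map, Phi''Map, ContinuousMap.coe_mk]
    by_cases h : ((t : ℝ)) ≤ 1/2
    · rw [if_pos h, if_pos h]
    · rw [if_neg h, if_neg h]
      apply Subtype.ext
      rw [zeta_coe, eta_coe]
      have harg : Real.pi * (2 - 2 * ((t:ℝ))) = Real.pi - Real.pi * (2 * ((t:ℝ)) - 1) := by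
        ring
      rw [harg, Real.cos_pi_sub, Real.sin_pi_sub]
      norm_num [coe_neg_sphere, hXodd]


noncomputable def KMap : C((I × Pa n) × I, Sph n) where
  toFun z :=
    if ((z.2 : ℝ)) ≤ (1 - (z.1.1 : ℝ)) / 2
    then z.1.2.1 (Set.projIcc (0:ℝ) 1 zero_le_one (2 * (z.2:ℝ) + (z.1.1:ℝ)))
    else if ((z.2 : ℝ)) ≤ 1 - (z.1.1 : ℝ) / 2
    then eta X hX1 hX2 (z.1.2.1 0, 2 - 2 * (z.2:ℝ) - (z.1.1:ℝ))
    else z.1.2.1 (Set.projIcc (0:ℝ) 1 zero_le_one (2 * (z.2:ℝ) + (z.1.1:ℝ) - 2))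
  continuous_toFun := by
    have hs : Continuous (fun z : (I × Pa n) × I => ((z.1.1 : ℝ))) :=
      continuous_subtype_val.comp (continuous_fst.comp continuous_fst)
    have ht : Continuous (fun z : (I × Pa n) × I => ((z.2 : ℝ))) :=
      continuous_subtype_val.comp continuous_snd
    have hval : Continuous (fun z : (I × Pa n) × I => z.1.2.1) :=
      continuous_subtype_val.comp (continuous_snd.comp continuous_fst)
    have hsg0 : Continuous (fun z : (I × Pa n) × I => z.1.2.1 0) :=
      (continuous_eval_const (0:I)).comp hval
    have hB : Continuous (fun z : (I × Pa n) × I =>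
        eta X hX1 hX2 (z.1.2.1 0, 2 - 2 * (z.2:ℝ) - (z.1.1:ℝ))) :=
      (eta X hX1 hX2).continuous.comp (hsg0.prodMk
        (((continuous_const.sub (continuous_const.mul ht))).sub hs))
    have hC : Continuous (fun z : (I × Pa n) × I =>
        z.1.2.1 (Set.projIcc (0:ℝ) 1 zero_le_one (2 * (z.2:ℝ) + (z.1.1:ℝ) - 2))) :=
      cont_eval hval (((continuous_const.mul ht).add hs).sub continuous_const)
    have hinner : Continuous (fun z : (I × Pa n) × I =>
        if ((z.2 : ℝ)) ≤ 1 - (z.1.1 : ℝ) / 2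
        then eta X hX1 hX2 (z.1.2.1 0, 2 - 2 * (z.2:ℝ) - (z.1.1:ℝ))
        else z.1.2.1 (Set.projIcc (0:ℝ) 1 zero_le_one (2 * (z.2:ℝ) + (z.1.1:ℝ) - 2))) := by
      apply Continuous.if_le hB hC ht (continuous_const.sub (hs.div_const 2))
      intro z hz
      simp only [Pi.sub_apply] at hz
      have h1 : 2 - 2 * ((z.2:ℝ)) - ((z.1.1:ℝ)) = 0 := by rw [hz]; ring
      have h2 : 2 * ((z.2:ℝ)) + ((z.1.1:ℝ)) - 2 = 0 := by rw [hz]; ring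
      rw [h1, h2, proj_zero]
      apply Subtype.ext
      rw [eta_coe]
      simp
    apply Continuous.if_le
      (cont_eval hval ((continuous_const.mul ht).add hs)) hinner ht
      ((continuous_const.sub hs).div_const 2)
    intro z hz
    simp only [Pi.sub_apply] at hz
    have hcond : ((z.2 : ℝ)) ≤ 1 - (z.1.1 : ℝ) / 2 := by
      rw [hz]
      have := (z.1.1).2.2
      linarith
    rw [if_pos hcond]
    have h1 : 2 * ((z.2:ℝ)) + ((z.1.1:ℝ)) = 1 := by rw [hz]; ring
    have h2 : 2 - 2 * ((z.2:ℝ)) - ((z.1.1:ℝ)) = 1 := by rw [hz]; ring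
    simp only [Pi.add_apply, Pi.mul_apply]
    rw [h1, h2, proj_one, z.1.2.2]
    apply Subtype.ext
    rw [eta_coe]
    simp [coe_neg_sphere]

lemma k_loop (p : I × Pa n) :
    (KMap X hX1 hX2).curry p 0 = (KMap X hX1 hX2).curry p 1 := by
  simp only [ContinuousMap.curry_apply]
  show (KMap X hX1 hX2) (p, 0) = (KMap X hX1 hX2) (p, 1)
  simp only [KMap, ContinuousMap.coe_mk]
  have hs0 : (0:ℝ) ≤ (p.1 : ℝ) := p.1.2.1
  have hs1 : ((p.1 : ℝ)) ≤ 1 := p.1.2.2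
  have hc0 : (((0:I) : ℝ)) ≤ (1 - (p.1 : ℝ)) / 2 := by norm_num; linarith
  have hc1 : ¬ (((1:I) : ℝ)) ≤ (1 - (p.1 : ℝ)) / 2 := by norm_num; linarith
  rw [if_pos hc0, if_neg hc1]
  by_cases h : (((1:I) : ℝ)) ≤ 1 - (p.1 : ℝ) / 2
  · have hp0 : ((p.1 : ℝ)) = 0 := by
      have : ((1:I):ℝ) = 1 := rfl
      rw [this] at h
      linarith
    rw [if_pos h]
    have h1 : 2 * (((0:I)):ℝ) + ((p.1:ℝ)) = 0 := by
      rw [hp0]; norm_num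
    have h2 : 2 - 2 * (((1:I)):ℝ) - ((p.1:ℝ)) = 0 := by
      rw [hp0]; norm_num
    rw [h1, h2, proj_zero]
    apply Subtype.ext
    rw [eta_coe]
    simp
  · rw [if_neg h]
    congr 1
    have h1 : 2 * (((0:I)):ℝ) + ((p.1:ℝ)) = ((p.1:ℝ)) := by norm_num
    have h2 : 2 * (((1:I)):ℝ) + ((p.1:ℝ)) - 2 = ((p.1:ℝ)) := by norm_num
    rw [h1, h2]

noncomputable def H2 : (Phi'' X hX1 hX2).Homotopy (Phi' X hX1 hX2) where
  toFun p := Subtype.mk ((KMap X hX1 hX2).curry p) (k_loop X hX1 hX2 p)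
  continuous_toFun := (KMap X hX1 hX2).curry.continuous.subtype_mk _
  map_zero_left sg := by
    apply Subtype.ext
    apply ContinuousMap.ext
    intro t
    show (KMap X hX1 hX2) ((0, sg), t) = (Phi''Map X hX1 hX2) (sg, t)
    simp only [KMap, Phi''Map, ContinuousMap.coe_mk]
    have hz : (((0:I)):ℝ) = 0 := rfl
    rw [hz]
    by_cases h : ((t : ℝ)) ≤ 1/2
    · rw [if_pos (by linarith : ((t:ℝ)) ≤ (1 - 0)/2), if_pos h]
      norm_num
    · rw [if_neg (by intro hc; apply h; linarith : ¬ ((t:ℝ)) ≤ (1 - 0)/2), if_neg h,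
        if_pos (by have := t.2.2; linarith : ((t:ℝ)) ≤ 1 - 0/2)]
      norm_num
  map_one_left sg := by
    apply Subtype.ext
    apply ContinuousMap.ext
    intro t
    show (KMap X hX1 hX2) ((1, sg), t) = (Phi'Map X hX1 hX2) (sg, t)
    simp only [KMap, Phi'Map, ContinuousMap.coe_mk]
    have hz : (((1:I)):ℝ) = 1 := rfl
    rw [hz]
    by_cases h0 : ((t : ℝ)) ≤ (1 - 1)/2
    · have ht0 : ((t : ℝ)) = 0 := le_antisymm (by linarith) t.2.1
      rw [if_pos h0, if_pos (by rw [ht0]; norm_num : ((t:ℝ)) ≤ 1/2)]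
      rw [ht0]
      norm_num [proj_one]
      rw [sg.2]
      apply Subtype.ext
      rw [eta_coe]
      simp [coe_neg_sphere]
    · rw [if_neg h0]
      by_cases h : ((t : ℝ)) ≤ 1/2
      · rw [if_pos (by linarith : ((t:ℝ)) ≤ 1 - 1/2), if_pos h]
        congr 2
        ring
      · rw [if_neg (by intro hc; apply h; linarith : ¬ ((t:ℝ)) ≤ 1 - 1/2), if_neg h]
        congr 1
        ring

end Stmt18


/-- Let `n` be odd and let `X, Y` be orthonormal continuous tangent
vector fields on `S^n` with `X` odd.  With `η_q(t) = cos(πt) q + sin(πt) X(q)`, the two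
maps `Φ(σ) = concat(σ, η_{−σ(0)})` and `Φ'(σ) = concat(reverse(η_{σ(0)}), σ)` are
well-defined continuous maps `P_a S^n → Λ S^n`, and `Φ` is homotopic to `Φ'`. -/
theorem stmt_18 (n : ℕ) (hn : Odd n)
    (X Y : C(Metric.sphere (0 : EuclideanSpace ℝ (Fin (n + 1))) 1,
      EuclideanSpace ℝ (Fin (n + 1))))
    (hX1 : ∀ p, ⟪X p, (p : EuclideanSpace ℝ (Fin (n + 1)))⟫ = 0)
    (hX2 : ∀ p, ‖X p‖ = 1)
    (hXodd : ∀ p, X (-p) = -(X p))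
    (hY1 : ∀ p, ⟪Y p, (p : EuclideanSpace ℝ (Fin (n + 1)))⟫ = 0)
    (hY2 : ∀ p, ‖Y p‖ = 1)
    (hXY : ∀ p, ⟪X p, Y p⟫ = 0) :
    ∃ Φ Φ' : C({γ : C(I, Metric.sphere (0 : EuclideanSpace ℝ (Fin (n + 1))) 1) //
          γ 1 = -(γ 0)},
        {γ : C(I, Metric.sphere (0 : EuclideanSpace ℝ (Fin (n + 1))) 1) // γ 0 = γ 1}),
      -- `Φ(σ) = concat(σ, η_{−σ(0)})`
      (∀ sg (t : I),
        ((t : ℝ) ≤ 1 / 2 →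
          (Φ sg).1 t = sg.1 (Set.projIcc (0 : ℝ) 1 zero_le_one (2 * (t : ℝ)))) ∧
        (1 / 2 ≤ (t : ℝ) →
          (((Φ sg).1 t : EuclideanSpace ℝ (Fin (n + 1)))) =
            Real.cos (Real.pi * (2 * (t : ℝ) - 1)) •
                (-(sg.1 0 : EuclideanSpace ℝ (Fin (n + 1)))) +
              Real.sin (Real.pi * (2 * (t : ℝ) - 1)) • X (-(sg.1 0)))) ∧
      -- `Φ'(σ) = concat(reverse(η_{σ(0)}), σ)`
      (∀ sg (t : I),
        ((t : ℝ) ≤ 1 / 2 →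
          (((Φ' sg).1 t : EuclideanSpace ℝ (Fin (n + 1)))) =
            Real.cos (Real.pi * (1 - 2 * (t : ℝ))) •
                ((sg.1 0 : EuclideanSpace ℝ (Fin (n + 1)))) +
              Real.sin (Real.pi * (1 - 2 * (t : ℝ))) • X (sg.1 0)) ∧
        (1 / 2 ≤ (t : ℝ) →
          (Φ' sg).1 t = sg.1 (Set.projIcc (0 : ℝ) 1 zero_le_one (2 * (t : ℝ) - 1)))) ∧
      Φ.Homotopic Φ' := by
  refine ⟨Stmt18.Phi X hX1 hX2, Stmt18.Phi' X hX1 hX2, ?_, ?_, ?_⟩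
  · intro sg t
    constructor
    · intro ht
      show (Stmt18.PhiMap X hX1 hX2) (sg, t) = _
      simp only [Stmt18.PhiMap, ContinuousMap.coe_mk]
      rw [if_pos ht]
    · intro ht
      by_cases heq : ((t : ℝ)) ≤ 1/2
      · have ht' : ((t : ℝ)) = 1/2 := le_antisymm heq ht
        show ((Stmt18.PhiMap X hX1 hX2) (sg, t) : EuclideanSpace ℝ (Fin (n + 1))) = _
        simp only [Stmt18.PhiMap, ContinuousMap.coe_mk]
        rw [if_pos heq]
        have h1 : 2 * ((t:ℝ)) = 1 := by rw [ht']; ring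
        have h0 : 2 * ((t:ℝ)) - 1 = 0 := by rw [h1]; ring
        rw [h0, h1, Stmt18.proj_one, sg.2]
        simp [coe_neg_sphere]
      · show ((Stmt18.PhiMap X hX1 hX2) (sg, t) : EuclideanSpace ℝ (Fin (n + 1))) = _
        simp only [Stmt18.PhiMap, ContinuousMap.coe_mk]
        rw [if_neg heq, Stmt18.eta_coe, coe_neg_sphere]
  · intro sg t
    constructor
    · intro ht
      show ((Stmt18.Phi'Map X hX1 hX2) (sg, t) : EuclideanSpace ℝ (Fin (n + 1))) = _
      simp only [Stmt18.Phi'Map, ContinuousMap.coe_mk]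
      rw [if_pos ht, Stmt18.eta_coe]
    · intro ht
      by_cases heq : ((t : ℝ)) ≤ 1/2
      · have ht' : ((t : ℝ)) = 1/2 := le_antisymm heq ht
        show (Stmt18.Phi'Map X hX1 hX2) (sg, t) = _
        simp only [Stmt18.Phi'Map, ContinuousMap.coe_mk]
        rw [if_pos heq]
        have h1 : 2 * ((t:ℝ)) - 1 = 0 := by rw [ht']; ring
        have h0 : 1 - 2 * ((t:ℝ)) = 0 := by rw [ht']; ring
        rw [h0, h1, Stmt18.proj_zero]
        apply Subtype.ext
        rw [Stmt18.eta_coe]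
        simp
      · show (Stmt18.Phi'Map X hX1 hX2) (sg, t) = _
        simp only [Stmt18.Phi'Map, ContinuousMap.coe_mk]
        rw [if_neg heq]
  · exact ContinuousMap.Homotopic.trans
      ⟨Stmt18.H1 X Y hX1 hX2 hXodd hY1 hY2 hXY⟩
      ⟨Stmt18.H2 X hX1 hX2⟩
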